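/- Let Δ ⊂ ℝⁿ be a compact convex polytope with 0 in its interior and l its Ricci affine function. There exists a constant c > 0 such that I_l(g) ≥ c ∫_Δ g dy for all normalized convex functions g (convex with g ≥ g(0) = 0) if and only if inf_Δ l > 0. -/

import Mathlib

open MeasureTheory

set_option maxHeartbeats 1000000

/-- Uniform relative Ding stability: there is `c > 0` with
`I_l(g) ≥ c∫_Δ g` for all normalized convex `g` iff `inf_Δ l > 0`. -/
theorem uniform_relative_ding_stable_iff {n : ℕ} (Δ : Set (Fin n → ℝ))
    (hΔc : IsCompact Δ) (hΔconv : Convex ℝ Δ)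
    (h0 : (0 : Fin n → ℝ) ∈ interior Δ)
    (l : (Fin n → ℝ) → ℝ)
    (hla : ∃ a : Fin n → ℝ, ∃ c : ℝ, ∀ y, l y = (∑ i, a i * y i) + c)
    (hl1 : ∫ y in Δ, l y = 1)
    (hlm : ∀ i : Fin n, ∫ y in Δ, y i * l y = 0) :
    (∃ c : ℝ, 0 < c ∧ ∀ g : (Fin n → ℝ) → ℝ, ConvexOn ℝ Δ g →
        g 0 = 0 → (∀ y ∈ Δ, 0 ≤ g y) → IntegrableOn g Δ →
        c * ∫ y in Δ, g y ≤ -g 0 + ∫ y in Δ, g y * l y) ↔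
    (∃ δ : ℝ, 0 < δ ∧ ∀ y ∈ Δ, δ ≤ l y) := by
  obtain ⟨a, b, hl⟩ := hla
  have hleq : l = fun y => (∑ i, a i * y i) + b := funext hl
  have hlcont : Continuous l := by
    rw [hleq]
    exact (continuous_finset_sum _ fun i _ =>
      (continuous_const.mul (continuous_apply i))).add continuous_const
  have h0Δ : (0 : Fin n → ℝ) ∈ Δ := interior_subset h0
  obtain ⟨r, hr, hball⟩ := Metric.isOpen_iff.mp isOpen_interior 0 h0
  have hballΔ : Metric.ball (0 : Fin n → ℝ) r ⊆ Δ := hball.trans interior_subset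
  have hl0 : l 0 = b := by simp [hl]
  -- affinity of l
  have haff : ∀ (α β : ℝ) (x y : Fin n → ℝ), α + β = 1 →
      l (α • x + β • y) = α * l x + β * l y := by
    intro α β x y hab
    simp only [hl]
    have hsum : ∀ i ∈ Finset.univ, a i * (α • x + β • y) i
        = α * (a i * x i) + β * (a i * y i) := by
      intro i _
      simp only [Pi.add_apply, Pi.smul_apply, smul_eq_mul]
      ring
    rw [Finset.sum_congr rfl hsum, Finset.sum_add_distrib, ← Finset.mul_sum, ← Finset.mul_sum]
    linear_combination (-b) * hab
  set A : ℝ := ∑ i, |a i| with hA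
  have hAnn : 0 ≤ A := Finset.sum_nonneg fun i _ => abs_nonneg _
  constructor
  · -- forward direction
    rintro ⟨c, hc, hstab⟩
    obtain ⟨y₀, hy₀Δ, hy₀min⟩ := hΔc.exists_isMinOn ⟨0, h0Δ⟩ hlcont.continuousOn
    refine ⟨l y₀, ?_, fun y hy => hy₀min hy⟩
    by_contra hm'
    push_neg at hm'
    set m := l y₀ with hmdef
    have hΔvolpos : 0 < volume Δ :=
      lt_of_lt_of_le (Metric.measure_ball_pos volume (0 : Fin n → ℝ) hr) (measure_mono hballΔ)
    have hΔvolfin : volume Δ < ⊤ := hΔc.measure_lt_top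
    -- first: m < b
    have hmb : m < b := by
      rcases eq_or_ne a 0 with ha | ha
      · -- l constant b, then b * vol = 1 so b > 0, contradiction with m ≤ 0
        exfalso
        have hlconst : ∀ y, l y = b := by intro y; simp [hl, ha]
        have hone : (1 : ℝ) = (volume Δ).toReal * b := by
          rw [← hl1]
          simp [hlconst, setIntegral_const, smul_eq_mul, measureReal_def]
        have hv : 0 ≤ (volume Δ).toReal := ENNReal.toReal_nonneg
        have hb : 0 < b := by nlinarith
        have hmbeq : m = b := hlconst y₀
        linarith
      · -- a ≠ 0 : pick z ∈ Δ with l z < b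
        obtain ⟨i₀, hi₀⟩ := Function.ne_iff.mp ha
        have hApos : 0 < A := by
          have h1 : 0 < |a i₀| := abs_pos.mpr hi₀
          calc (0:ℝ) < |a i₀| := h1
            _ ≤ ∑ i, |a i| := Finset.single_le_sum (f := fun i => |a i|) (fun i _ => abs_nonneg _) (Finset.mem_univ i₀)
            _ = A := hA.symm
        set ε : ℝ := r / (2 * (A + 1)) with hε
        have hεpos : 0 < ε := by positivity
        set z : Fin n → ℝ := -(ε • a) with hz
        have hzΔ : z ∈ Δ := by
          apply hballΔ
          rw [Metric.mem_ball, dist_zero_right]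
          have hzn : ‖z‖ ≤ r / 2 := by
            apply (pi_norm_le_iff_of_nonneg (by positivity)).mpr
            intro i
            simp only [hz, Pi.neg_apply, Pi.smul_apply, smul_eq_mul, norm_neg,
              Real.norm_eq_abs, abs_mul, abs_of_pos hεpos]
            have h1 : |a i| ≤ A := hA ▸
              Finset.single_le_sum (f := fun j => |a j|) (fun j _ => abs_nonneg (a j)) (Finset.mem_univ i)
            calc ε * |a i| ≤ ε * (A + 1) := by nlinarith
              _ = r / 2 := by rw [hε]; field_simp
          linarith
        have hsq : 0 < ∑ i, a i ^ 2 := by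
          apply Finset.sum_pos' (fun i _ => sq_nonneg _)
          exact ⟨i₀, Finset.mem_univ _, by simpa [sq_abs] using pow_pos (abs_pos.mpr hi₀) 2⟩
        have hlz : l z < b := by
          have hsum : ∑ i, a i * z i = -(ε * ∑ i, a i ^ 2) := by
            simp only [hz, Pi.neg_apply, Pi.smul_apply, smul_eq_mul, mul_neg, Finset.mul_sum,
              ← Finset.sum_neg_distrib]
            apply Finset.sum_congr rfl; intro i _; ring
          rw [hl, hsum]
          nlinarith
        calc m ≤ l z := hy₀min hzΔ
          _ < b := hlz
    -- test function
    set t : ℝ := min c (b - m) / 2 with ht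
    have htpos : 0 < t := by
      have h1 : 0 < min c (b - m) := lt_min hc (by linarith)
      rw [ht]; linarith
    have htc : t ≤ c / 2 := by
      have h1 : min c (b - m) ≤ c := min_le_left _ _
      rw [ht]; linarith
    have htbm : t ≤ b - m := by
      have h1 : min c (b - m) ≤ b - m := min_le_right _ _
      rw [ht]; linarith
    set g : (Fin n → ℝ) → ℝ := fun y => max 0 (m + t - l y) with hg
    have hgcont : Continuous g := continuous_const.max (continuous_const.sub hlcont)
    have hgconv : ConvexOn ℝ Δ g := by
      have hconvh : ConvexOn ℝ Δ (fun y => m + t - l y) := by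
        refine ⟨hΔconv, fun x hx y hy α β hα hβ hab => ?_⟩
        simp only [smul_eq_mul]
        refine le_of_eq ?_
        rw [haff α β x y hab]
        linear_combination (-(m + t)) * hab
      exact (convexOn_const 0 hΔconv).sup hconvh
    have hg0 : g 0 = 0 := by
      simp only [hg, hl0]
      apply max_eq_left
      linarith
    have hgpos : ∀ y ∈ Δ, 0 ≤ g y := fun y _ => le_max_left _ _
    have hgint : IntegrableOn g Δ := hgcont.continuousOn.integrableOn_compact hΔc
    have hgl_int : IntegrableOn (fun y => g y * l y) Δ :=
      hgint.mul_continuousOn hlcont.continuousOn hΔc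
    -- ∫ g l ≤ (m+t) ∫ g
    have hbound : ∫ y in Δ, g y * l y ≤ (m + t) * ∫ y in Δ, g y := by
      have hmono : ∀ y ∈ Δ, g y * l y ≤ g y * (m + t) := by
        intro y hy
        by_cases h : l y < m + t
        · exact mul_le_mul_of_nonneg_left h.le (le_max_left _ _)
        · push_neg at h
          have hgy0 : g y = 0 := by simp only [hg]; apply max_eq_left; linarith
          simp [hgy0]
      calc ∫ y in Δ, g y * l y ≤ ∫ y in Δ, g y * (m + t) :=
            setIntegral_mono_on hgl_int (hgint.mul_const _) hΔc.measurableSet hmono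
        _ = (m + t) * ∫ y in Δ, g y := by rw [integral_mul_const]; ring
    -- ∫ g > 0
    have hintpos : 0 < ∫ y in Δ, g y := by
      have hgpos' : ∀ y, (0:ℝ) ≤ g y := fun y => le_max_left _ _
      rw [setIntegral_pos_iff_support_of_nonneg_ae
        (Filter.Eventually.of_forall hgpos') hgint]
      set K : ℝ := b + A * r - m with hK
      have hKpos : 0 < K := by nlinarith
      set s : ℝ := min 1 (t / (2 * K)) with hs
      have hspos : 0 < s := lt_min one_pos (by positivity)
      have hs1 : s ≤ 1 := min_le_left _ _
      have hsK : s * K ≤ t / 2 := by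
        have h1 : s ≤ t / (2 * K) := min_le_right _ _
        calc s * K ≤ (t / (2 * K)) * K := by nlinarith
          _ = t / 2 := by field_simp
      set p : Fin n → ℝ := (1 - s) • y₀ with hp
      have hBsub : Metric.ball p (s * r) ⊆ Function.support g ∩ Δ := by
        intro zz hzz
        rw [Metric.mem_ball] at hzz
        set u : Fin n → ℝ := s⁻¹ • (zz - p) with hu
        have hzz' : (1 - s) • y₀ + s • u = zz := by
          rw [hu, smul_inv_smul₀ hspos.ne', ← hp]
          abel
        have huball : u ∈ Metric.ball (0 : Fin n → ℝ) r := by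
          rw [Metric.mem_ball, dist_zero_right, hu, norm_smul, norm_inv,
            Real.norm_eq_abs, abs_of_pos hspos]
          have h2 : ‖zz - p‖ < s * r := by rwa [← dist_eq_norm]
          calc s⁻¹ * ‖zz - p‖ < s⁻¹ * (s * r) :=
                mul_lt_mul_of_pos_left h2 (by positivity)
            _ = r := by field_simp
        have hzzΔ : zz ∈ Δ := by
          rw [← hzz']
          exact hΔconv hy₀Δ (hballΔ huball) (by linarith) hspos.le (by ring)
        have hur : ‖u‖ ≤ r := by
          have := huball
          rw [Metric.mem_ball, dist_zero_right] at this
          exact this.le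
        have hlu : l u ≤ b + A * r := by
          rw [hl]
          have hsum : ∑ i, a i * u i ≤ A * r := by
            calc ∑ i, a i * u i ≤ ∑ i, |a i| * r := by
                  apply Finset.sum_le_sum; intro i _
                  calc a i * u i ≤ |a i * u i| := le_abs_self _
                    _ = |a i| * |u i| := abs_mul _ _
                    _ ≤ |a i| * r := by
                        have h1 : |u i| ≤ ‖u‖ := by
                          simpa [Real.norm_eq_abs] using norm_le_pi_norm u i
                        have h3 : |u i| ≤ r := h1.trans hur
                        exact mul_le_mul_of_nonneg_left h3 (abs_nonneg _)
              _ = A * r := by rw [← Finset.sum_mul]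
          linarith
        have hlzz : l zz ≤ m + t / 2 := by
          rw [← hzz', haff (1 - s) s y₀ u (by ring), ← hmdef]
          have h4 : s * l u ≤ s * (b + A * r) := mul_le_mul_of_nonneg_left hlu hspos.le
          nlinarith
        constructor
        · have h5 : 0 < m + t - l zz := by linarith
          simp only [Function.mem_support, hg]
          exact ne_of_gt (lt_max_iff.mpr (Or.inr h5))
        · exact hzzΔ
      calc (0 : ENNReal) < volume (Metric.ball p (s * r)) :=
            Metric.measure_ball_pos _ _ (by positivity)
        _ ≤ volume (Function.support g ∩ Δ) := measure_mono hBsub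
    have key := hstab g hgconv hg0 hgpos hgint
    rw [hg0, neg_zero, zero_add] at key
    have hchain : c * ∫ y in Δ, g y ≤ (m + t) * ∫ y in Δ, g y := key.trans hbound
    nlinarith
  · -- reverse direction
    rintro ⟨δ, hδ, hδl⟩
    refine ⟨δ, hδ, fun g hgconv hg0 hgpos hgint => ?_⟩
    rw [hg0, neg_zero, zero_add]
    have h1 : ∫ y in Δ, δ * g y = δ * ∫ y in Δ, g y := integral_const_mul δ g
    rw [← h1]
    apply setIntegral_mono_on (hgint.const_mul δ)
      (hgint.mul_continuousOn hlcont.continuousOn hΔc) hΔc.measurableSet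
    intro y hy
    calc δ * g y = g y * δ := mul_comm _ _
      _ ≤ g y * l y := mul_le_mul_of_nonneg_left (hδl y hy) (hgpos y hy)
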